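/- For a real d×N matrix Z and scalar a > 0, log det(I + a·Z·Zᵀ) ≤ d·log(1 + (a/d)·tr(Z·Zᵀ)), with equality if and only if all nonzero singular values of Z are equal (i.e., Z·Zᵀ is a scalar multiple of the identity). -/

import Mathlib

open Matrix

section Aux

variable {d : ℕ}

lemma aux_det_trace (hd : 0 < d) {A : Matrix (Fin d) (Fin d) ℝ} (hA : A.IsHermitian) :
    A.det = ∏ i, hA.eigenvalues i ∧ A.trace = ∑ i, hA.eigenvalues i ∧
      ∀ a : ℝ, (1 + a • A).det = ∏ i, (1 + a * hA.eigenvalues i) := by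
  have hU1 : (hA.eigenvectorUnitary : Matrix (Fin d) (Fin d) ℝ) *
      star (hA.eigenvectorUnitary : Matrix (Fin d) (Fin d) ℝ) = 1 :=
    (Matrix.mem_unitaryGroup_iff).mp hA.eigenvectorUnitary.2
  have hU2 : star (hA.eigenvectorUnitary : Matrix (Fin d) (Fin d) ℝ) *
      (hA.eigenvectorUnitary : Matrix (Fin d) (Fin d) ℝ) = 1 :=
    (Matrix.mem_unitaryGroup_iff').mp hA.eigenvectorUnitary.2
  refine ⟨by simpa using hA.det_eq_prod_eigenvalues, ?_, ?_⟩
  · calc A.trace = ((hA.eigenvectorUnitary : Matrix (Fin d) (Fin d) ℝ) *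
          diagonal (RCLike.ofReal ∘ hA.eigenvalues) *
          star (hA.eigenvectorUnitary : Matrix (Fin d) (Fin d) ℝ)).trace := by
            exact congrArg Matrix.trace hA.spectral_theorem
      _ = (star (hA.eigenvectorUnitary : Matrix (Fin d) (Fin d) ℝ) *
          (hA.eigenvectorUnitary : Matrix (Fin d) (Fin d) ℝ) *
          diagonal (RCLike.ofReal ∘ hA.eigenvalues)).trace := by
            rw [Matrix.trace_mul_cycle]
      _ = ∑ i, hA.eigenvalues i := by rw [hU2, one_mul, Matrix.trace_diagonal]; simp
  · intro a
    have key : 1 + a • A = (hA.eigenvectorUnitary : Matrix (Fin d) (Fin d) ℝ) *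
        diagonal (fun i => 1 + a * hA.eigenvalues i) *
        star (hA.eigenvectorUnitary : Matrix (Fin d) (Fin d) ℝ) := by
      have hdg : (diagonal (fun i => 1 + a * hA.eigenvalues i) :
          Matrix (Fin d) (Fin d) ℝ) = 1 + a • diagonal (RCLike.ofReal ∘ hA.eigenvalues) := by
        ext i j
        by_cases h : i = j
        · subst h
          simp [Matrix.diagonal_apply_eq, Matrix.one_apply_eq]
        · simp [Matrix.diagonal_apply_ne _ h, Matrix.one_apply_ne h]
      rw [hdg, Matrix.mul_add, Matrix.add_mul, Matrix.mul_one, hU1,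
        Matrix.mul_smul, Matrix.smul_mul]
      exact congrArg (fun M => 1 + a • M) hA.spectral_theorem
    rw [key, Matrix.det_mul, Matrix.det_mul, mul_comm, ← mul_assoc, ← Matrix.det_mul, hU2,
      Matrix.det_one, one_mul, Matrix.det_diagonal]

end Aux

/-- AM–GM type bound: `log det(I + a·Z·Zᵀ) ≤ d·log(1 + (a/d)·tr(Z·Zᵀ))`, with equality iff
`Z·Zᵀ` is a scalar multiple of the identity (all nonzero singular values of `Z` equal). -/
theorem log_det_le_log_trace_bound (d N : ℕ) (hd : 0 < d)
    (Z : Matrix (Fin d) (Fin N) ℝ) (a : ℝ) (ha : 0 < a) :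
    Real.log (Matrix.det (1 + a • (Z * Zᵀ))) ≤
      (d : ℝ) * Real.log (1 + (a / d) * Matrix.trace (Z * Zᵀ)) ∧
    (Real.log (Matrix.det (1 + a • (Z * Zᵀ))) =
        (d : ℝ) * Real.log (1 + (a / d) * Matrix.trace (Z * Zᵀ)) ↔
      ∃ c : ℝ, Z * Zᵀ = c • (1 : Matrix (Fin d) (Fin d) ℝ)) := by
  have hdR : (0 : ℝ) < d := by exact_mod_cast hd
  have hPSD : (Z * Zᵀ).PosSemidef := by
    have h := Matrix.posSemidef_self_mul_conjTranspose Z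
    simpa using h
  have hA : (Z * Zᵀ).IsHermitian := hPSD.isHermitian
  obtain ⟨hdet, htr, hdet'⟩ := aux_det_trace hd hA
  set lam := hA.eigenvalues with hlam
  have hnn : ∀ i, 0 ≤ lam i := fun i => hPSD.eigenvalues_nonneg i
  have hpos : ∀ i, (0:ℝ) < 1 + a * lam i := fun i => by
    have h1 := mul_nonneg ha.le (hnn i); linarith
  have hlogdet : Real.log (Matrix.det (1 + a • (Z * Zᵀ))) =
      ∑ i, Real.log (1 + a * lam i) := by
    rw [hdet' a, Real.log_prod (fun i _ => (hpos i).ne')]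
  have hw : ∑ _i : Fin d, (1 / (d:ℝ)) = 1 := by
    rw [Finset.sum_const, Finset.card_univ, Fintype.card_fin, nsmul_eq_mul]
    field_simp
  have hsum : ∑ i, (1 / (d:ℝ)) • (1 + a * lam i) =
      1 + (a / d) * Matrix.trace (Z * Zᵀ) := by
    rw [htr, Finset.mul_sum, ← hw]
    rw [← Finset.sum_add_distrib]
    refine Finset.sum_congr rfl fun i _ => ?_
    rw [smul_eq_mul]
    field_simp
    rw [hw, one_mul]
  have hmem : ∀ i ∈ Finset.univ, (1 + a * lam i) ∈ Set.Ioi (0:ℝ) := fun i _ => hpos i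
  have hwpos : ∀ i ∈ (Finset.univ : Finset (Fin d)), (0:ℝ) < 1 / (d:ℝ) := fun _ _ => by
    positivity
  have hdmul : ∀ x : ℝ, (d:ℝ) * ((1/(d:ℝ)) * x) = x := fun x => by
    field_simp
  have hjensen : ∑ i, (1 / (d:ℝ)) • Real.log (1 + a * lam i) ≤
      Real.log (∑ i, (1 / (d:ℝ)) • (1 + a * lam i)) :=
    strictConcaveOn_log_Ioi.concaveOn.le_map_sum (fun i hi => (hwpos i hi).le) hw hmem
  have hsumlog : ∑ i, Real.log (1 + a * lam i) =
      (d:ℝ) * ∑ i, (1 / (d:ℝ)) • Real.log (1 + a * lam i) := by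
    rw [Finset.mul_sum]
    refine Finset.sum_congr rfl fun i _ => ?_
    rw [smul_eq_mul, hdmul]
  have hineq : Real.log (Matrix.det (1 + a • (Z * Zᵀ))) ≤
      (d : ℝ) * Real.log (1 + (a / d) * Matrix.trace (Z * Zᵀ)) := by
    rw [hlogdet, ← hsum, hsumlog]
    exact mul_le_mul_of_nonneg_left hjensen hdR.le
  refine ⟨hineq, ?_, ?_⟩
  · -- equality → scalar multiple of identity
    intro heq
    have heq' : Real.log (∑ i, (1 / (d:ℝ)) • (1 + a * lam i)) ≤
        ∑ i, (1 / (d:ℝ)) • Real.log (1 + a * lam i) := by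
      have h1 : (d:ℝ) * Real.log (∑ i, (1 / (d:ℝ)) • (1 + a * lam i)) =
          (d:ℝ) * ∑ i, (1 / (d:ℝ)) • Real.log (1 + a * lam i) := by
        rw [hsum, ← heq, hlogdet, hsumlog]
      exact (mul_left_cancel₀ hdR.ne' h1).le
    have hall := strictConcaveOn_log_Ioi.eq_of_map_sum_eq hwpos hw hmem heq'
    have hconst : ∀ i, lam i = lam ⟨0, hd⟩ := by
      intro i
      have h3 := hall (Finset.mem_univ i) (Finset.mem_univ (⟨0, hd⟩ : Fin d))
      have h2 : a * lam i = a * lam ⟨0, hd⟩ := by linarith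
      exact mul_left_cancel₀ ha.ne' h2
    refine ⟨lam ⟨0, hd⟩, ?_⟩
    have hdiag : (diagonal (RCLike.ofReal ∘ lam) : Matrix (Fin d) (Fin d) ℝ) =
        lam ⟨0, hd⟩ • 1 := by
      have hfun : (RCLike.ofReal ∘ lam : Fin d → ℝ) = fun _ => lam ⟨0, hd⟩ := by
        funext i; simpa using hconst i
      rw [hfun, Matrix.smul_one_eq_diagonal]
    calc Z * Zᵀ = (hA.eigenvectorUnitary : Matrix (Fin d) (Fin d) ℝ) *
          diagonal (RCLike.ofReal ∘ lam) *
          star (hA.eigenvectorUnitary : Matrix (Fin d) (Fin d) ℝ) := hA.spectral_theorem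
      _ = lam ⟨0, hd⟩ • ((hA.eigenvectorUnitary : Matrix (Fin d) (Fin d) ℝ) *
          star (hA.eigenvectorUnitary : Matrix (Fin d) (Fin d) ℝ)) := by
          rw [hdiag, Matrix.mul_smul, Matrix.smul_mul, Matrix.mul_one]
      _ = lam ⟨0, hd⟩ • 1 := by
          rw [(Matrix.mem_unitaryGroup_iff).mp hA.eigenvectorUnitary.2]
  · -- scalar multiple → equality
    rintro ⟨c, hc⟩
    have htrnn : 0 ≤ (Z * Zᵀ).trace := by
      rw [htr]; exact Finset.sum_nonneg fun i _ => hnn i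
    have htrc : (Z * Zᵀ).trace = c * d := by
      rw [hc, Matrix.trace_smul, Matrix.trace_one]
      simp [Fintype.card_fin]
    have hcnn : 0 ≤ c := by
      by_contra h
      push_neg at h
      nlinarith
    have h1 : (1 : Matrix (Fin d) (Fin d) ℝ) + a • (c • 1) = (1 + a * c) • 1 := by
      rw [smul_smul, add_smul, one_smul]
    have hdet2 : (1 + a • (Z * Zᵀ)).det = (1 + a * c) ^ d := by
      rw [hc, h1, Matrix.det_smul, Matrix.det_one, mul_one, Fintype.card_fin]
    have h2 : 1 + a / (d:ℝ) * (c * d) = 1 + a * c := by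
      field_simp
    rw [hdet2, htrc, Real.log_pow, h2]
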